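/- Let X and Y be Banach spaces. If the pair (X, Y) has property L_{p,o}, then the pair (X, 𝕂) has property L_{p,o}. -/

import Mathlib

/-- The pair `(X, Y)` has property `L_{o,p}`: for every `ε > 0` and `x ∈ S_X` there is
`η(ε, x) > 0` such that any norm-one operator `T` with `‖T x‖ > 1 - η` attains its norm at a
point `x₀ ∈ S_X` with `‖x₀ - x‖ < ε`. -/
def HasLop (𝕜 X Y : Type*) [RCLike 𝕜] [NormedAddCommGroup X] [NormedSpace 𝕜 X]
    [NormedAddCommGroup Y] [NormedSpace 𝕜 Y] : Prop :=
  ∀ ε : ℝ, 0 < ε → ∀ x : X, ‖x‖ = 1 →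
    ∃ η : ℝ, 0 < η ∧ ∀ T : X →L[𝕜] Y, ‖T‖ = 1 → 1 - η < ‖T x‖ →
      ∃ x₀ : X, ‖x₀‖ = 1 ∧ ‖T x₀‖ = 1 ∧ ‖x₀ - x‖ < ε

/-- The pair `(X, Y)` has property `L_{p,o}`: for every `ε > 0` and norm-one operator `T` there
is `η(ε, T) > 0` such that whenever `x ∈ S_X` satisfies `‖T x‖ > 1 - η`, there is a norm-one
operator `S` attaining its norm at `x` with `‖S - T‖ < ε`. -/
def HasLpo (𝕜 X Y : Type*) [RCLike 𝕜] [NormedAddCommGroup X] [NormedSpace 𝕜 X]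
    [NormedAddCommGroup Y] [NormedSpace 𝕜 Y] : Prop :=
  ∀ ε : ℝ, 0 < ε → ∀ T : X →L[𝕜] Y, ‖T‖ = 1 →
    ∃ η : ℝ, 0 < η ∧ ∀ x : X, ‖x‖ = 1 → 1 - η < ‖T x‖ →
      ∃ S : X →L[𝕜] Y, ‖S‖ = 1 ∧ ‖S x‖ = 1 ∧ ‖S - T‖ < ε

/-- If `(X, Y)` has property `L_{p,o}` (with `Y` nontrivial), then `(X, 𝕜)`
has property `L_{p,o}`. -/
theorem scalar_lpo_of_lpo (𝕜 X Y : Type*) [RCLike 𝕜] [NormedAddCommGroup X]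
    [NormedSpace 𝕜 X] [CompleteSpace X] [NormedAddCommGroup Y] [NormedSpace 𝕜 Y]
    [CompleteSpace Y] (hY : ∃ y₀ : Y, ‖y₀‖ = 1)
    (h : HasLpo 𝕜 X Y) : HasLpo 𝕜 X 𝕜 := by
  obtain ⟨y₀, hy₀⟩ := hY
  intro ε hε f hf
  have hε' : (0:ℝ) < ε / 6 := by positivity
  set T : X →L[𝕜] Y := f.smulRight y₀ with hTdef
  have hTnorm : ‖T‖ = 1 := by
    rw [hTdef, ContinuousLinearMap.norm_smulRight_apply, hf, hy₀, one_mul]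
  obtain ⟨η₀, hη₀, hmain⟩ := h (ε / 6) hε' T hTnorm
  refine ⟨min η₀ (min (ε / 6) (1/2)), by positivity, ?_⟩
  set η : ℝ := min η₀ (min (ε / 6) (1/2)) with hηdef
  have hηε' : η ≤ ε / 6 := le_trans (min_le_right _ _) (min_le_left _ _)
  have hηhalf : η ≤ 1/2 := le_trans (min_le_right _ _) (min_le_right _ _)
  have hηη₀ : η ≤ η₀ := min_le_left _ _
  intro x hx hfx
  have hTx : ‖T x‖ = ‖f x‖ := by
    simp [hTdef, norm_smul, hy₀]
  have hTx' : 1 - η₀ < ‖T x‖ := by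
    rw [hTx]; linarith
  obtain ⟨S, hSnorm, hSx, hST⟩ := hmain x hx hTx'
  have hSx0 : S x ≠ 0 := by
    intro h0; rw [h0, norm_zero] at hSx; norm_num at hSx
  obtain ⟨φ, hφnorm, hφSx⟩ := exists_dual_vector 𝕜 (S x) (norm_ne_zero_iff.mpr hSx0)
  set g : X →L[𝕜] 𝕜 := φ.comp S with hgdef
  have hgx : g x = 1 := by
    simp [hgdef, hφSx, hSx]
  have hgle : ‖g‖ ≤ 1 := by
    calc ‖g‖ ≤ ‖φ‖ * ‖S‖ := ContinuousLinearMap.opNorm_comp_le _ _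
    _ = 1 := by rw [hφnorm, hSnorm, one_mul]
  have hgnorm : ‖g‖ = 1 := by
    refine le_antisymm hgle ?_
    have := g.unit_le_opNorm x (le_of_eq hx)
    rwa [hgx, norm_one] at this
  set a : 𝕜 := φ y₀ with hadef
  -- key operator estimate
  have hkey : ‖g - a • f‖ < ε / 6 := by
    have heq : g - a • f = φ.comp (S - T) := by
      ext z
      simp [hgdef, hTdef, hadef, map_smul, smul_eq_mul]
      ring
    rw [heq]
    calc ‖φ.comp (S - T)‖ ≤ ‖φ‖ * ‖S - T‖ := ContinuousLinearMap.opNorm_comp_le _ _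
    _ = ‖S - T‖ := by rw [hφnorm, one_mul]
    _ < ε / 6 := hST
  -- scalar estimate
  have hfx0 : ‖f x‖ ≠ 0 := by
    have : (0:ℝ) < ‖f x‖ := by linarith
    exact ne_of_gt this
  have hfxpos : (0:ℝ) < ‖f x‖ := lt_of_le_of_ne (norm_nonneg _) (Ne.symm hfx0)
  have hfxle : ‖f x‖ ≤ 1 := by
    have := f.unit_le_opNorm x (le_of_eq hx)
    rwa [hf] at this
  have hscalar : ‖a * f x - 1‖ < ε / 6 := by
    have hφSx1 : φ (S x) = 1 := by
      rw [hφSx, hSx]; norm_num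
    have h1 : (1 : 𝕜) - a * f x = φ ((S - T) x) := by
      simp [hTdef, hadef, map_smul, smul_eq_mul, hφSx1]
      ring
    have h2 : ‖φ ((S - T) x)‖ ≤ ‖S - T‖ := by
      calc ‖φ ((S - T) x)‖ ≤ ‖φ‖ * ‖(S - T) x‖ := φ.le_opNorm _
      _ = ‖(S - T) x‖ := by rw [hφnorm, one_mul]
      _ ≤ ‖S - T‖ * ‖x‖ := (S - T).le_opNorm x
      _ = ‖S - T‖ := by rw [hx, mul_one]
    have : ‖(1 : 𝕜) - a * f x‖ < ε / 6 := by
      rw [h1]; exact lt_of_le_of_lt h2 hST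
    rwa [← norm_neg, neg_sub] at this
  set c : 𝕜 := ((‖f x‖ : ℝ) : 𝕜) with hcdef
  have hc0 : c ≠ 0 := by
    simp [hcdef, hfx0]
  have hcnorm : ‖c‖ = ‖f x‖ := by
    simp [hcdef, abs_of_pos hfxpos]
  set θ : 𝕜 := f x / c with hθdef
  have hθnorm : ‖θ‖ = 1 := by
    rw [hθdef, norm_div, hcnorm, div_self hfx0]
  refine ⟨θ • g, ?_, ?_, ?_⟩
  · rw [norm_smul θ g, hθnorm, hgnorm, one_mul]
  · rw [ContinuousLinearMap.smul_apply, norm_smul θ (g x), hθnorm, hgx, norm_one, one_mul]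
  · -- ‖θ • g - f‖ < ε
    have hsplit : θ • g - f = θ • (g - a • f) + (θ * a - 1) • f := by
      ext z
      simp [smul_eq_mul]
      ring
    have hθa : ‖θ * a - 1‖ < 4 * (ε / 6) := by
      have heq : θ * a - 1 = (f x * a - c) * c⁻¹ := by
        rw [hθdef, sub_mul, mul_inv_cancel₀ hc0, div_eq_mul_inv]; ring
      have hnum : ‖f x * a - c‖ < ε / 6 + η := by
        calc ‖f x * a - c‖ = ‖(a * f x - 1) + (1 - c)‖ := by ring_nf
        _ ≤ ‖a * f x - 1‖ + ‖(1:𝕜) - c‖ := norm_add_le _ _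
        _ < ε / 6 + η := by
            have h1c : ‖(1:𝕜) - c‖ ≤ η := by
              have : (1:𝕜) - c = ((1 - ‖f x‖ : ℝ) : 𝕜) := by
                push_cast [hcdef]; ring
              rw [this]
              rw [RCLike.norm_ofReal, abs_of_nonneg (by linarith)]
              linarith
            linarith [hscalar]
      calc ‖θ * a - 1‖ = ‖f x * a - c‖ * ‖f x‖⁻¹ := by
            rw [heq, norm_mul, norm_inv, hcnorm]
      _ ≤ ‖f x * a - c‖ * 2 := by
            apply mul_le_mul_of_nonneg_left _ (norm_nonneg _)
            rw [inv_le_comm₀ hfxpos (by norm_num)]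
            linarith
      _ < (ε / 6 + η) * 2 := by
            apply mul_lt_mul_of_pos_right hnum (by norm_num)
      _ ≤ 4 * (ε / 6) := by linarith
    calc ‖θ • g - f‖ = ‖θ • (g - a • f) + (θ * a - 1) • f‖ := by rw [hsplit]
    _ ≤ ‖θ • (g - a • f)‖ + ‖(θ * a - 1) • f‖ := norm_add_le _ _
    _ = ‖g - a • f‖ + ‖θ * a - 1‖ := by
          rw [norm_smul θ (g - a • f), norm_smul (θ * a - 1) f, hθnorm, one_mul, hf, mul_one]
    _ < ε / 6 + 4 * (ε / 6) := by linarith [hkey, hθa]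
    _ < ε := by linarith
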